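/- The complexified complement M(A) is the disjoint union of the sets S(C) over all chambers C: the sets S(C), C ∈ ch(A), are pairwise disjoint, and M(A) = ⋃_{C ∈ ch(A)} S(C). -/

import Mathlib

open Set

namespace IY

/-- An affine hyperplane arrangement in `ℝ^ℓ`, given by `n` affine-linear forms
with nonzero linear parts; the `i`-th hyperplane is the zero set of `α i`. -/
structure Arrangement (ℓ n : ℕ) where
  α : Fin n → ((Fin ℓ → ℝ) →ᵃ[ℝ] ℝ)
  nonzero : ∀ i, (α i).linear ≠ 0

namespace Arrangement

variable {ℓ n : ℕ} (A : Arrangement ℓ n)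

/-- The hyperplane `H_i = {α_i = 0}`. -/
def H (i : Fin n) : Set (Fin ℓ → ℝ) := {x | A.α i x = 0}

/-- The real complement of the subarrangement indexed by `s`. -/
def compOn (s : Set (Fin n)) : Set (Fin ℓ → ℝ) := {x | ∀ i ∈ s, A.α i x ≠ 0}

/-- Chambers of the subarrangement indexed by `s` : connected components of its
real complement. -/
def IsChamberOn (s : Set (Fin n)) (C : Set (Fin ℓ → ℝ)) : Prop :=
  ∃ x ∈ A.compOn s, C = connectedComponentIn (A.compOn s) x

/-- Chambers of the full arrangement. -/
def IsChamber (C : Set (Fin ℓ → ℝ)) : Prop := A.IsChamberOn Set.univ C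

/-- The intersection poset of the subarrangement indexed by `s` : nonempty
intersections of subfamilies (the empty intersection giving `ℝ^ℓ`). -/
def LOn (s : Set (Fin n)) (X : Set (Fin ℓ → ℝ)) : Prop :=
  X.Nonempty ∧ ∃ t : Set (Fin n), t ⊆ s ∧ X = ⋂ i ∈ t, A.H i

/-- The intersection poset `L(A)`. -/
def L (X : Set (Fin ℓ → ℝ)) : Prop := A.LOn Set.univ X

/-- The real part of a point of `ℂ^ℓ`. -/
def reP {ℓ : ℕ} (z : Fin ℓ → ℂ) : Fin ℓ → ℝ := fun j => (z j).re

/-- The imaginary part of a point of `ℂ^ℓ`. -/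
def imP {ℓ : ℕ} (z : Fin ℓ → ℂ) : Fin ℓ → ℝ := fun j => (z j).im

/-- The point `x + iv` of `ℂ^ℓ`. -/
def mkC {ℓ : ℕ} (x v : Fin ℓ → ℝ) : Fin ℓ → ℂ := fun j => ⟨x j, v j⟩

/-- The complexified complement `M(A) = ℂ^ℓ \ ⋃ H_ℂ`; a point `x + iv` lies on
`H_ℂ = {α_ℂ = 0}` iff `α(x) = 0` and the linear part of `α` kills `v`. -/
def M : Set (Fin ℓ → ℂ) :=
  {z | ∀ i : Fin n, ¬(A.α i (reP z) = 0 ∧ (A.α i).linear (imP z) = 0)}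

end Arrangement

/-- Dimension of a subset of `ℝ^ℓ` (for affine subspaces, their dimension). -/
noncomputable def dimS {ℓ : ℕ} (X : Set (Fin ℓ → ℝ)) : ℕ :=
  Module.finrank ℝ (affineSpan ℝ X).direction

/-- The direction `τ(X)` of (the affine span of) a subset of `ℝ^ℓ`. -/
noncomputable def tau {ℓ : ℕ} (X : Set (Fin ℓ → ℝ)) : Submodule ℝ (Fin ℓ → ℝ) :=
  (affineSpan ℝ X).direction

/-- A flag in `ℝ^ℓ` given by defining affine-linear forms `h_1, …, h_ℓ`
(0-indexed: `h j` is the form `h_{j+1}`). -/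
structure Flag (ℓ : ℕ) where
  h : Fin ℓ → ((Fin ℓ → ℝ) →ᵃ[ℝ] ℝ)

namespace Flag

variable {ℓ : ℕ} (𝓕 : Flag ℓ)

/-- The flag subspace `F^q = {h_{q+1} = ⋯ = h_ℓ = 0}`. -/
def F (q : ℕ) : Set (Fin ℓ → ℝ) := {x | ∀ j : Fin ℓ, q ≤ (j : ℕ) → 𝓕.h j x = 0}

/-- `𝓕.hq q` is the form `h_q` in 1-indexed notation (junk value `0` out of range). -/
noncomputable def hq (q : ℕ) : (Fin ℓ → ℝ) →ᵃ[ℝ] ℝ :=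
  if hlt : q - 1 < ℓ then 𝓕.h ⟨q - 1, hlt⟩ else 0

end Flag

/-- Genericity of the flag: for every `X ∈ L(A)`, `F^q ∩ X` is an affine subspace
of dimension `q + dim X - ℓ`, empty when `q + dim X < ℓ`. -/
def GenericFlag {ℓ n : ℕ} (A : Arrangement ℓ n) (𝓕 : Flag ℓ) : Prop :=
  ∀ X, A.L X → ∀ q, q ≤ ℓ →
    (ℓ ≤ q + dimS X →
      ∃ W : AffineSubspace ℝ (Fin ℓ → ℝ), (W : Set (Fin ℓ → ℝ)).Nonempty ∧
        (W : Set (Fin ℓ → ℝ)) = 𝓕.F q ∩ X ∧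
        Module.finrank ℝ W.direction = q + dimS X - ℓ) ∧
    (q + dimS X < ℓ → 𝓕.F q ∩ X = ∅)

/-- Condition (1) of the Assumption, for the subarrangement indexed by `s`:
if a chamber `C` meets `F^q` but not `F^{q-1}`, then `h_q > 0` on `C ∩ F^q`. -/
def Cond1On {ℓ n : ℕ} (A : Arrangement ℓ n) (s : Set (Fin n)) (𝓕 : Flag ℓ) : Prop :=
  ∀ q : ℕ, 1 ≤ q → q ≤ ℓ → ∀ C, A.IsChamberOn s C →
    (C ∩ 𝓕.F q).Nonempty → C ∩ 𝓕.F (q - 1) = ∅ →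
    ∀ x ∈ C ∩ 𝓕.F q, 0 < 𝓕.hq q x

/-- Condition (2) of the Assumption, for the subarrangement indexed by `s`:
distinct `X, X'` in the intersection poset of dimension `ℓ - q` have different
`h_q`-values at their intersection points with `F^q`. -/
def Cond2On {ℓ n : ℕ} (A : Arrangement ℓ n) (s : Set (Fin n)) (𝓕 : Flag ℓ) : Prop :=
  ∀ q : ℕ, 1 ≤ q → q ≤ ℓ → ∀ X X', A.LOn s X → A.LOn s X' →
    dimS X = ℓ - q → dimS X' = ℓ - q → X ≠ X' →
    ∀ p ∈ X ∩ 𝓕.F q, ∀ p' ∈ X' ∩ 𝓕.F q, 𝓕.hq q p ≠ 𝓕.hq q p'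

/-- `C ∈ ch^q_F(A)` : `C` is a chamber meeting `F^q` but not `F^{q-1}`
(the latter condition being empty for `q = 0`, since `F^{-1} = ∅`). -/
def ChF {ℓ n : ℕ} (A : Arrangement ℓ n) (𝓕 : Flag ℓ) (q : ℕ)
    (C : Set (Fin ℓ → ℝ)) : Prop :=
  A.IsChamber C ∧ (C ∩ 𝓕.F q).Nonempty ∧ (q = 0 ∨ C ∩ 𝓕.F (q - 1) = ∅)

/-- `X = X_C` for `C ∈ ch^q_F(A)` : `X ∈ L(A)` has dimension `ℓ - q` and meets
`F^q` exactly in the unique minimum point of `h_q` on the closure of `C ∩ F^q`. -/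
def IsXC {ℓ n : ℕ} (A : Arrangement ℓ n) (𝓕 : Flag ℓ) (q : ℕ)
    (C X : Set (Fin ℓ → ℝ)) : Prop :=
  A.L X ∧ dimS X = ℓ - q ∧
  ∃ p : Fin ℓ → ℝ, X ∩ 𝓕.F q = {p} ∧ p ∈ closure (C ∩ 𝓕.F q) ∧
    ∀ y ∈ closure (C ∩ 𝓕.F q), 𝓕.hq q p ≤ 𝓕.hq q y

/-- Indices of the hyperplanes parallel to `X`, i.e. `A_{[X]} = {H : τ(X) ⊆ τ(H)}`. -/
def parIdx {ℓ n : ℕ} (A : Arrangement ℓ n) (X : Set (Fin ℓ → ℝ)) : Set (Fin n) :=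
  {i | tau X ≤ LinearMap.ker (A.α i).linear}

/-- `H_i ∈ Sep(C, C')` : the hyperplane `H_i` separates the chambers `C` and `C'`. -/
def SepCh {ℓ n : ℕ} (A : Arrangement ℓ n) (C C' : Set (Fin ℓ → ℝ)) (i : Fin n) : Prop :=
  ((∀ x ∈ C, 0 < A.α i x) ∧ (∀ y ∈ C', A.α i y < 0)) ∨
  ((∀ x ∈ C, A.α i x < 0) ∧ (∀ y ∈ C', 0 < A.α i y))

/-- `H_i ∈ Sep(p₁, p₂)` : the hyperplane `H_i` meets the segment `[p₁, p₂]`. -/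
def SepPt {ℓ n : ℕ} (A : Arrangement ℓ n) (p₁ p₂ : Fin ℓ → ℝ) (i : Fin n) : Prop :=
  ∃ w ∈ segment ℝ p₁ p₂, A.α i w = 0

/-- The piece `S(C)` attached to a chamber with `τ(X_C) = T` and base point `p`:
all `x + iv` with `v ∈ T` and `v ∉ τ(H)` for every `H ∈ Sep(p, x)`. -/
def S {ℓ n : ℕ} (A : Arrangement ℓ n) (T : Submodule ℝ (Fin ℓ → ℝ))
    (p : Fin ℓ → ℝ) : Set (Fin ℓ → ℂ) :=
  {z | Arrangement.imP z ∈ T ∧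
    ∀ i : Fin n, SepPt A p (Arrangement.reP z) i →
      (A.α i).linear (Arrangement.imP z) ≠ 0}

end IY

namespace IY

open Arrangement

variable {ℓ n : ℕ}

lemma affcont (f : (Fin ℓ → ℝ) →ᵃ[ℝ] ℝ) : Continuous f :=
  AffineMap.continuous_of_finiteDimensional f

lemma aff_add (f : (Fin ℓ → ℝ) →ᵃ[ℝ] ℝ) (p u : Fin ℓ → ℝ) :
    f (p + u) = f p + f.linear u := by
  simpa [add_comm] using f.map_vadd p u

lemma lineMap_real (a b t : ℝ) : AffineMap.lineMap a b t = a + t * (b - a) := by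
  simp [AffineMap.lineMap_apply]; ring

lemma pos_mul_trans {a b c : ℝ} (hab : 0 < a * b) (hac : 0 < a * c) : 0 < b * c := by
  have ha : a ≠ 0 := by rintro rfl; simp at hab
  have h2 : 0 < a * a := mul_self_pos.mpr ha
  nlinarith [mul_pos hab hac]

/-- The sign-region of `x` with respect to the subarrangement `s`. -/
def Qset (A : Arrangement ℓ n) (s : Set (Fin n)) (x : Fin ℓ → ℝ) : Set (Fin ℓ → ℝ) :=
  {y | ∀ i ∈ s, 0 < A.α i x * A.α i y}

lemma mem_Qset_self {A : Arrangement ℓ n} {s x} (hx : x ∈ A.compOn s) : x ∈ Qset A s x :=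
  fun i hi => mul_self_pos.mpr (hx i hi)

lemma Qset_subset_compOn (A : Arrangement ℓ n) (s) (x) : Qset A s x ⊆ A.compOn s := by
  intro y hy i hi
  intro h0
  have := hy i hi
  rw [h0, mul_zero] at this; exact lt_irrefl _ this

lemma Qset_convex (A : Arrangement ℓ n) (s) (x) : Convex ℝ (Qset A s x) := by
  intro y hy z hz a b ha hb hab
  intro i hi
  have h1 := hy i hi
  have h2 := hz i hi
  have hc : A.α i (a • y + b • z) = a * A.α i y + b * A.α i z := by
    have := Convex.combo_affine_apply (f := A.α i) (x := y) (y := z) hab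
    simpa [smul_eq_mul] using this
  rw [hc]
  rcases ha.lt_or_eq with ha' | ha'
  · rcases hb.lt_or_eq with hb' | hb'
    · nlinarith
    · rw [← hb'] at hab ⊢; simp at hab ⊢; nlinarith [hab]
  · rw [← ha'] at hab ⊢; simp at hab ⊢; rw [hab]; simpa using h2

lemma Qset_open (A : Arrangement ℓ n) (s) (x) : IsOpen (Qset A s x) := by
  have : Qset A s x = ⋂ i : Fin n, {y | i ∈ s → 0 < A.α i x * A.α i y} := by
    ext y; simp [Qset]
  rw [this]
  apply isOpen_iInter_of_finite
  intro i
  by_cases hi : i ∈ s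
  · simp only [hi, forall_true_left]
    exact isOpen_lt continuous_const (continuous_const.mul (affcont _))
  · simp [hi]

lemma connectedComponentIn_eq_Qset (A : Arrangement ℓ n) {s x} (hx : x ∈ A.compOn s) :
    connectedComponentIn (A.compOn s) x = Qset A s x := by
  apply Subset.antisymm
  · set R : Set (Fin ℓ → ℝ) := {y | ∃ i ∈ s, A.α i x * A.α i y < 0} with hR
    have hRopen : IsOpen R := by
      have : R = ⋃ i : Fin n, {y | i ∈ s ∧ A.α i x * A.α i y < 0} := by
        ext y; simp [hR]
      rw [this]
      apply isOpen_iUnion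
      intro i
      by_cases hi : i ∈ s
      · simp only [hi, true_and]
        exact isOpen_lt (continuous_const.mul (affcont _)) continuous_const
      · convert isOpen_empty using 1; ext y; simp [hi]
    apply IsPreconnected.subset_left_of_subset_union (Qset_open A s x) hRopen
    · rw [disjoint_left]
      rintro y hy ⟨i, hi, hlt⟩
      exact absurd (hy i hi) (not_lt.mpr hlt.le)
    · intro y hy
      have hy' : y ∈ A.compOn s := connectedComponentIn_subset _ _ hy
      by_cases h : ∀ i ∈ s, 0 < A.α i x * A.α i y
      · exact Or.inl h
      · push_neg at h
        obtain ⟨i, hi, hle⟩ := h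
        refine Or.inr ⟨i, hi, lt_of_le_of_ne hle ?_⟩
        intro h0
        rcases mul_eq_zero.mp h0 with h' | h'
        · exact hx i hi h'
        · exact hy' i hi h'
    · exact ⟨x, mem_connectedComponentIn hx, mem_Qset_self hx⟩
    · exact isPreconnected_connectedComponentIn
  · exact IsPreconnected.subset_connectedComponentIn
      ((Qset_convex A s x).isPreconnected) (mem_Qset_self hx) (Qset_subset_compOn A s x)

lemma chamber_eq_Qset {A : Arrangement ℓ n} {C} (hC : A.IsChamber C) {p} (hp : p ∈ C) :
    C = Qset A univ p := by
  obtain ⟨x₀, hx₀, rfl⟩ := hC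
  rw [connectedComponentIn_eq_Qset A hx₀] at hp ⊢
  ext y
  constructor
  · intro hy i hi
    exact pos_mul_trans (hp i hi) (hy i hi)
  · intro hy i hi
    have h1 : 0 < A.α i p * A.α i x₀ := by
      have := hp i hi; nlinarith
    exact pos_mul_trans h1 (hy i hi)

lemma isChamber_Qset {A : Arrangement ℓ n} {x} (hx : x ∈ A.compOn univ) :
    A.IsChamber (Qset A univ x) :=
  ⟨x, hx, (connectedComponentIn_eq_Qset A hx).symm⟩

lemma chamber_nonempty {A : Arrangement ℓ n} {C} (hC : A.IsChamber C) : C.Nonempty := by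
  obtain ⟨x₀, hx₀, rfl⟩ := hC
  exact ⟨x₀, mem_connectedComponentIn hx₀⟩

lemma chamber_subset_compOn {A : Arrangement ℓ n} {C} (hC : A.IsChamber C) :
    C ⊆ A.compOn univ := by
  obtain ⟨x₀, hx₀, rfl⟩ := hC
  exact connectedComponentIn_subset _ _

lemma chamber_eq_of_mem {A : Arrangement ℓ n} {C C'} (hC : A.IsChamber C)
    (hC' : A.IsChamber C') {p} (hp : p ∈ C) (hp' : p ∈ C') : C = C' := by
  rw [chamber_eq_Qset hC hp, chamber_eq_Qset hC' hp']

lemma finite_chambers (A : Arrangement ℓ n) : {C | A.IsChamber C}.Finite := by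
  apply Set.Finite.subset (Set.finite_range
    (fun ε : Fin n → Bool => {y : Fin ℓ → ℝ | ∀ i, 0 < (if ε i then (1:ℝ) else -1) * A.α i y}))
  rintro C hC
  obtain ⟨x₀, hx₀, rfl⟩ := hC
  refine ⟨fun i => decide (0 < A.α i x₀), ?_⟩
  rw [connectedComponentIn_eq_Qset A hx₀]
  ext y
  constructor
  · intro hy
    intro i _
    have h1 := hy i
    simp only [decide_eq_true_eq] at h1
    by_cases h : 0 < A.α i x₀
    · simp only [h, if_true] at h1
      nlinarith
    · simp only [h, if_false] at h1
      have hne := hx₀ i trivial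
      have h2 : A.α i x₀ < 0 := lt_of_le_of_ne (not_lt.mp h) hne
      nlinarith
  · intro hy
    intro i
    have h1 := hy i trivial
    simp only [decide_eq_true_eq]
    by_cases h : 0 < A.α i x₀
    · simp only [h, if_true]
      nlinarith
    · simp only [h, if_false]
      nlinarith

/-! ### Affine subspace layer -/

lemma lin_surj (A : Arrangement ℓ n) (i : Fin n) : Function.Surjective (A.α i).linear := by
  obtain ⟨w, hw⟩ : ∃ w, (A.α i).linear w ≠ 0 := by
    by_contra h; push_neg at h; exact A.nonzero i (LinearMap.ext fun w => h w)
  intro c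
  refine ⟨(c / (A.α i).linear w) • w, ?_⟩
  rw [map_smul, smul_eq_mul]; field_simp

lemma H_nonempty (A : Arrangement ℓ n) (i : Fin n) : (A.H i).Nonempty := by
  obtain ⟨w, hw⟩ := lin_surj A i (-(A.α i 0))
  refine ⟨0 + w, ?_⟩
  show A.α i _ = 0
  rw [aff_add, hw]; ring

lemma mem_mk'_set {p y : Fin ℓ → ℝ} {K : Submodule ℝ (Fin ℓ → ℝ)} :
    y ∈ (AffineSubspace.mk' p K : Set (Fin ℓ → ℝ)) ↔ y - p ∈ K := by
  rw [SetLike.mem_coe, AffineSubspace.mem_mk', vsub_eq_sub]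

lemma biInter_H_eq_mk' (A : Arrangement ℓ n) (t : Set (Fin n)) (p : Fin ℓ → ℝ)
    (hp : p ∈ ⋂ i ∈ t, A.H i) :
    (⋂ i ∈ t, A.H i) = ↑(AffineSubspace.mk' p (⨅ i ∈ t, LinearMap.ker (A.α i).linear)) := by
  ext y
  rw [mem_mk'_set]
  simp only [mem_iInter, Submodule.mem_iInf, LinearMap.mem_ker]
  simp only [mem_iInter] at hp
  constructor
  · intro h i hi
    have h1 : A.α i y = 0 := h i hi
    have h2 : A.α i p = 0 := hp i hi
    have := aff_add (A.α i) p (y - p)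
    simp only [add_sub_cancel] at this
    rw [h1, h2] at this; linarith [this]
  · intro h i hi
    have h2 : A.α i p = 0 := hp i hi
    have heq := aff_add (A.α i) p (y - p)
    simp only [add_sub_cancel] at heq
    show A.α i y = 0
    rw [heq, h2, h i hi]; ring

lemma tau_eq_biInf (A : Arrangement ℓ n) (t : Set (Fin n)) (p : Fin ℓ → ℝ)
    (hp : p ∈ ⋂ i ∈ t, A.H i) :
    tau (⋂ i ∈ t, A.H i) = ⨅ i ∈ t, LinearMap.ker (A.α i).linear := by
  rw [tau, biInter_H_eq_mk' A t p hp, AffineSubspace.affineSpan_coe,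
    AffineSubspace.direction_mk']

lemma L_rep {A : Arrangement ℓ n} {X : Set (Fin ℓ → ℝ)} (hX : A.L X) {p : Fin ℓ → ℝ}
    (hp : p ∈ X) : X = ↑(AffineSubspace.mk' p (tau X)) := by
  obtain ⟨hne, t, -, rfl⟩ := hX
  rw [tau_eq_biInf A t p hp]
  exact biInter_H_eq_mk' A t p hp

lemma mem_L_iff {A : Arrangement ℓ n} {X : Set (Fin ℓ → ℝ)} (hX : A.L X) {p : Fin ℓ → ℝ}
    (hp : p ∈ X) {y : Fin ℓ → ℝ} : y ∈ X ↔ y - p ∈ tau X := by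
  conv_lhs => rw [L_rep hX hp]
  exact mem_mk'_set

lemma dimS_eq_finrank_tau (X : Set (Fin ℓ → ℝ)) : dimS X = Module.finrank ℝ (tau X) := rfl

lemma tau_le_ker_of_subset_H {A : Arrangement ℓ n} {X : Set (Fin ℓ → ℝ)} (hX : A.L X)
    {p : Fin ℓ → ℝ} (hp : p ∈ X) {i : Fin n} (hsub : X ⊆ A.H i) :
    tau X ≤ LinearMap.ker (A.α i).linear := by
  intro u hu
  have hmem : p + u ∈ X := by rw [mem_L_iff hX hp]; simpa using hu
  have h1 : A.α i (p + u) = 0 := hsub hmem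
  have h2 : A.α i p = 0 := hsub hp
  rw [aff_add, h2] at h1
  simpa using h1

lemma subset_H_of_tau_le {A : Arrangement ℓ n} {X : Set (Fin ℓ → ℝ)} (hX : A.L X)
    {p : Fin ℓ → ℝ} (hp : p ∈ X) {i : Fin n} (hpH : p ∈ A.H i)
    (h : tau X ≤ LinearMap.ker (A.α i).linear) : X ⊆ A.H i := by
  intro y hy
  rw [mem_L_iff hX hp] at hy
  have h1 : (A.α i).linear (y - p) = 0 := h hy
  show A.α i y = 0
  have := aff_add (A.α i) p (y - p)
  simp only [add_sub_cancel] at this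
  rw [this, hpH, h1]; ring

lemma L_inter_H {A : Arrangement ℓ n} {X : Set (Fin ℓ → ℝ)} (hX : A.L X) {i : Fin n}
    (hne : (X ∩ A.H i).Nonempty) : A.L (X ∩ A.H i) := by
  obtain ⟨-, t, -, rfl⟩ := hX
  refine ⟨hne, insert i t, subset_univ _, ?_⟩
  rw [Set.biInter_insert, Set.inter_comm]

lemma tau_mono {X Y : Set (Fin ℓ → ℝ)} (h : X ⊆ Y) : tau X ≤ tau Y :=
  AffineSubspace.direction_le (affineSpan_mono ℝ h)

lemma dimS_mono {X Y : Set (Fin ℓ → ℝ)} (h : X ⊆ Y) : dimS X ≤ dimS Y :=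
  Submodule.finrank_mono (tau_mono h)

lemma dimS_inter_H_lt {A : Arrangement ℓ n} {X : Set (Fin ℓ → ℝ)} (hX : A.L X) {i : Fin n}
    {p : Fin ℓ → ℝ} (hp : p ∈ X ∩ A.H i) (hns : ¬ X ⊆ A.H i) :
    dimS (X ∩ A.H i) < dimS X := by
  rw [dimS_eq_finrank_tau, dimS_eq_finrank_tau]
  apply Submodule.finrank_lt_finrank_of_lt
  apply lt_of_le_of_ne (tau_mono inter_subset_left)
  intro heq
  apply hns
  apply subset_H_of_tau_le hX hp.1 hp.2
  rw [← heq]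
  obtain ⟨-, t, -, hXe⟩ := hX
  have hrep : X ∩ A.H i = ⋂ j ∈ insert i t, A.H j := by
    rw [Set.biInter_insert, ← hXe, Set.inter_comm]
  have hp' : p ∈ ⋂ j ∈ insert i t, A.H j := by rw [← hrep]; exact hp
  rw [hrep, tau_eq_biInf A _ p hp']
  intro u hu
  rw [Submodule.mem_iInf] at hu
  have := hu i
  rw [Submodule.mem_iInf] at this
  exact this (mem_insert i t)

lemma L_univ (A : Arrangement ℓ n) : A.L univ :=
  ⟨⟨0, trivial⟩, ∅, empty_subset _, by simp⟩

lemma dimS_univ : dimS (univ : Set (Fin ℓ → ℝ)) = ℓ := by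
  have hsp : affineSpan ℝ (univ : Set (Fin ℓ → ℝ)) = ⊤ := by
    rw [eq_top_iff]; intro x _; exact mem_affineSpan ℝ (Set.mem_univ x)
  rw [dimS, hsp, AffineSubspace.direction_top]
  rw [finrank_top]
  simp [Module.finrank_pi]

lemma L_H (A : Arrangement ℓ n) (i : Fin n) : A.L (A.H i) := by
  refine ⟨H_nonempty A i, {i}, subset_univ _, by simp⟩

lemma dimS_H (A : Arrangement ℓ n) (i : Fin n) : dimS (A.H i) + 1 = ℓ := by
  obtain ⟨p, hp⟩ := H_nonempty A i
  have hrep : A.H i = ⋂ j ∈ ({i} : Set (Fin n)), A.H j := by simp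
  have hp' : p ∈ ⋂ j ∈ ({i} : Set (Fin n)), A.H j := by rw [← hrep]; exact hp
  have htau : tau (A.H i) = LinearMap.ker (A.α i).linear := by
    rw [hrep, tau_eq_biInf A _ p hp']; simp
  rw [dimS_eq_finrank_tau, htau]
  have hrange : LinearMap.range (A.α i).linear = ⊤ :=
    LinearMap.range_eq_top.mpr (lin_surj A i)
  have := LinearMap.finrank_range_add_finrank_ker (A.α i).linear
  rw [hrange, finrank_top] at this
  simp only [Module.finrank_self] at this
  rw [add_comm] at this
  rw [this]
  simp [Module.finrank_pi]

/-! ### Flag layer -/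

lemma F_mono (𝓕 : Flag ℓ) {q q' : ℕ} (h : q ≤ q') : 𝓕.F q ⊆ 𝓕.F q' := by
  intro x hx j hj
  exact hx j (le_trans h hj)

lemma F_univ_of_ge (𝓕 : Flag ℓ) {q} (h : ℓ ≤ q) : 𝓕.F q = univ := by
  ext x
  simp only [Flag.F, mem_setOf_eq, mem_univ, iff_true]
  intro j hj
  exact absurd (lt_of_lt_of_le j.isLt (le_trans h hj)) (lt_irrefl _)

lemma hq_def (𝓕 : Flag ℓ) {q} (h2 : q ≤ ℓ) (h1 : 1 ≤ q) :
    𝓕.hq q = 𝓕.h ⟨q - 1, by omega⟩ := dif_pos (by omega)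

lemma mem_F_pred_iff (𝓕 : Flag ℓ) {q} (h1 : 1 ≤ q) (h2 : q ≤ ℓ) {x} :
    x ∈ 𝓕.F (q - 1) ↔ x ∈ 𝓕.F q ∧ 𝓕.hq q x = 0 := by
  rw [hq_def 𝓕 h2 h1]
  constructor
  · intro hx
    exact ⟨F_mono 𝓕 (Nat.sub_le q 1) hx, hx ⟨q - 1, by omega⟩ (le_refl _)⟩
  · rintro ⟨hx, h0⟩ j hj
    by_cases hq : q ≤ (j : ℕ)
    · exact hx j hq
    · have hje : j = ⟨q - 1, by omega⟩ := Fin.ext (by simp; omega)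
      rw [hje]; exact h0

lemma F_closed (𝓕 : Flag ℓ) (q : ℕ) : IsClosed (𝓕.F q) := by
  have hrep : 𝓕.F q = ⋂ j : Fin ℓ, {x | q ≤ (j : ℕ) → 𝓕.h j x = 0} := by
    ext x; simp [Flag.F]
  rw [hrep]
  apply isClosed_iInter
  intro j
  by_cases hj : q ≤ (j : ℕ)
  · simp only [hj, forall_true_left]
    exact isClosed_eq (affcont _) continuous_const
  · simp [hj]

lemma F_lineMap (𝓕 : Flag ℓ) {q} {x y : Fin ℓ → ℝ} (hx : x ∈ 𝓕.F q) (hy : y ∈ 𝓕.F q)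
    (t : ℝ) : AffineMap.lineMap x y t ∈ 𝓕.F q := by
  intro j hj
  rw [AffineMap.apply_lineMap, hx j hj, hy j hj]
  simp

lemma F_convex (𝓕 : Flag ℓ) (q : ℕ) : Convex ℝ (𝓕.F q) := by
  intro x hx y hy a b ha hb hab
  intro j hj
  rw [Convex.combo_affine_apply hab, hx j hj, hy j hj]
  simp

lemma gen_F {A : Arrangement ℓ n} {𝓕 : Flag ℓ} (hgen : GenericFlag A 𝓕) {q} (hq : q ≤ ℓ) :
    ∃ W : AffineSubspace ℝ (Fin ℓ → ℝ), (W : Set (Fin ℓ → ℝ)) = 𝓕.F q ∧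
      Module.finrank ℝ W.direction = q := by
  obtain ⟨W, hne, hco, hfr⟩ := (hgen univ (L_univ A) q hq).1 (by rw [dimS_univ]; omega)
  refine ⟨W, by rw [hco, inter_univ], ?_⟩
  rw [hfr, dimS_univ]; omega

lemma F_nonempty {A : Arrangement ℓ n} {𝓕 : Flag ℓ} (hgen : GenericFlag A 𝓕) {q}
    (hq : q ≤ ℓ) : (𝓕.F q).Nonempty := by
  obtain ⟨W, hne, hco, -⟩ := (hgen univ (L_univ A) q hq).1 (by rw [dimS_univ]; omega)
  rw [hco, inter_univ] at hne
  exact hne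

lemma gen_empty {A : Arrangement ℓ n} {𝓕 : Flag ℓ} (hgen : GenericFlag A 𝓕) {X q}
    (hX : A.L X) (hq : q ≤ ℓ) (h : q + dimS X < ℓ) : 𝓕.F q ∩ X = ∅ :=
  (hgen X hX q hq).2 h

/-! ### Density of generic points -/

lemma root_finite {a b : ℝ} (h : ¬(a = 0 ∧ b = 0)) : {t : ℝ | a + t * b = 0}.Finite := by
  rcases eq_or_ne b 0 with hb | hb
  · have : {t : ℝ | a + t * b = 0} = ∅ := by
      ext t; simp only [mem_setOf_eq, mem_empty_iff_false, iff_false]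
      rw [hb, mul_zero, add_zero]
      intro h0; exact h ⟨h0, hb⟩
    rw [this]; exact finite_empty
  · apply Set.Finite.subset (finite_singleton (-a / b))
    intro t ht
    simp only [mem_setOf_eq] at ht
    simp only [mem_singleton_iff]
    field_simp
    linarith

lemma exists_w_not_H {A : Arrangement ℓ n} {𝓕 : Flag ℓ} (hgen : GenericFlag A 𝓕)
    {q} (hq : q ≤ ℓ) (hFne : (𝓕.F q).Nonempty) (j : Fin n) :
    ∃ w ∈ 𝓕.F q, A.α j w ≠ 0 := by
  by_contra hcon
  push_neg at hcon
  have hsub : 𝓕.F q ∩ A.H j = 𝓕.F q := by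
    apply Subset.antisymm inter_subset_left
    intro y hy; exact ⟨hy, hcon y hy⟩
  have hdim := dimS_H A j
  rcases Nat.lt_or_ge q 1 with hq1 | hq1
  · have h0 : q = 0 := by omega
    have := gen_empty hgen (L_H A j) hq (by omega)
    rw [hsub] at this
    rw [this] at hFne
    exact absurd hFne not_nonempty_empty
  · obtain ⟨W, hne, hco, hfr⟩ := (hgen (A.H j) (L_H A j) q hq).1 (by omega)
    obtain ⟨W', hco', hfr'⟩ := gen_F hgen hq
    rw [hsub] at hco
    have : W = W' := SetLike.coe_injective (by rw [hco, hco'])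
    rw [this, hfr'] at hfr
    omega

lemma exists_offH {A : Arrangement ℓ n} {𝓕 : Flag ℓ} (hgen : GenericFlag A 𝓕)
    {q : ℕ} (hq : q ≤ ℓ) {U : Set (Fin ℓ → ℝ)} (hU : IsOpen U)
    (hne : (U ∩ 𝓕.F q).Nonempty) :
    ∃ y ∈ U ∩ 𝓕.F q, ∀ i, A.α i y ≠ 0 := by
  have key : ∀ s : Finset (Fin n), ∃ y ∈ U ∩ 𝓕.F q, ∀ i ∈ s, A.α i y ≠ 0 := by
    intro s
    induction s using Finset.induction_on with
    | empty => obtain ⟨y, hy⟩ := hne; exact ⟨y, hy, by simp⟩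
    | @insert j s hjs ih =>
      obtain ⟨y, hyU, hys⟩ := ih
      obtain ⟨w, hwF, hwj⟩ := exists_w_not_H hgen hq ⟨y, hyU.2⟩ j
      set c : ℝ →ᵃ[ℝ] (Fin ℓ → ℝ) := AffineMap.lineMap y w with hc
      have hcc : Continuous c := AffineMap.continuous_of_finiteDimensional c
      have hV : IsOpen (c ⁻¹' U) := hU.preimage hcc
      have h0V : (0 : ℝ) ∈ c ⁻¹' U := by
        simp only [mem_preimage, hc, AffineMap.lineMap_apply_zero]
        exact hyU.1
      obtain ⟨δ, hδ, hball⟩ := Metric.isOpen_iff.mp hV 0 h0V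
      have hBfin : (⋃ i ∈ insert j s, {t : ℝ | A.α i y + t * (A.α i w - A.α i y) = 0}).Finite := by
        apply Set.Finite.biUnion (Finset.finite_toSet _)
        intro i hi
        apply root_finite
        rintro ⟨h1, h2⟩
        rcases Finset.mem_insert.mp (by exact_mod_cast hi) with rfl | hi'
        · apply hwj
          have : A.α i w = A.α i y := by linarith
          rw [this, h1]
        · exact hys i hi' h1
      have hIoo : (Ioo (0 : ℝ) δ).Infinite := Set.Ioo_infinite hδ
      obtain ⟨t, ht⟩ := (hIoo.diff hBfin).nonempty
      obtain ⟨htI, htB⟩ := ht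
      refine ⟨c t, ⟨?_, ?_⟩, ?_⟩
      · apply hball
        rw [Metric.mem_ball, Real.dist_eq, sub_zero, abs_of_pos htI.1]
        exact htI.2
      · exact F_lineMap 𝓕 hyU.2 hwF t
      · intro i hi
        have hval : A.α i (c t) = A.α i y + t * (A.α i w - A.α i y) := by
          rw [hc, AffineMap.apply_lineMap, lineMap_real]
        rw [hval]
        intro h0
        apply htB
        simp only [mem_iUnion]
        exact ⟨i, by exact_mod_cast hi, h0⟩
  obtain ⟨y, hy, hall⟩ := key Finset.univ
  exact ⟨y, hy, fun i => hall i (Finset.mem_univ i)⟩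

/-! ### Separation characterization -/

lemma sepPt_of_zero {A : Arrangement ℓ n} {p x : Fin ℓ → ℝ} {i : Fin n}
    (h : A.α i x = 0) : SepPt A p x i :=
  ⟨x, right_mem_segment ℝ p x, h⟩

lemma sepPt_iff {A : Arrangement ℓ n} {p x : Fin ℓ → ℝ} {i : Fin n}
    (hp : A.α i p ≠ 0) (hx : A.α i x ≠ 0) :
    SepPt A p x i ↔ ¬ (0 < A.α i p * A.α i x) := by
  constructor
  · rintro ⟨w, hw, h0⟩ hpos
    rw [segment_eq_image_lineMap] at hw
    obtain ⟨t, ht, rfl⟩ := hw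
    rw [AffineMap.apply_lineMap, lineMap_real] at h0
    obtain ⟨ht0, ht1⟩ := ht
    rcases lt_or_gt_of_ne hp with hneg | hposp
    · have hxneg : A.α i x < 0 := by nlinarith
      have hsum : t * (-(A.α i x)) + (1 - t) * (-(A.α i p)) = 0 := by linarith
      have h2 : 0 ≤ t * (-(A.α i x)) := mul_nonneg ht0 (by linarith)
      have h3 : 0 ≤ (1 - t) * (-(A.α i p)) := mul_nonneg (by linarith) (by linarith)
      have h4 : t * (-(A.α i x)) = 0 := by linarith
      rcases mul_eq_zero.mp h4 with h5 | h5
      · rw [h5] at hsum; simp at hsum; nlinarith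
      · nlinarith
    · have hxpos : 0 < A.α i x := by nlinarith
      have hsum : t * (A.α i x) + (1 - t) * (A.α i p) = 0 := by linarith
      have h2 : 0 ≤ t * (A.α i x) := mul_nonneg ht0 (by linarith)
      have h3 : 0 ≤ (1 - t) * (A.α i p) := mul_nonneg (by linarith) (by linarith)
      have h4 : t * (A.α i x) = 0 := by linarith
      rcases mul_eq_zero.mp h4 with h5 | h5
      · rw [h5] at hsum; simp at hsum; nlinarith
      · nlinarith
  · intro hneg
    have hprod : A.α i p * A.α i x < 0 := by
      rcases lt_trichotomy (A.α i p * A.α i x) 0 with h | h | h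
      · exact h
      · exact absurd (mul_eq_zero.mp h) (by push_neg; exact ⟨hp, hx⟩)
      · exact absurd h hneg
    set a := A.α i p with ha
    set b := A.α i x with hb
    have hab : a - b ≠ 0 := by
      intro h; rw [sub_eq_zero] at h; rw [h] at hprod; nlinarith
    refine ⟨AffineMap.lineMap p x (a / (a - b)), ?_, ?_⟩
    · rw [segment_eq_image_lineMap]
      have hbounds : 0 ≤ a / (a - b) ∧ a / (a - b) ≤ 1 := by
        rcases lt_or_gt_of_ne hp with h | h
        · have hb0 : b > 0 := by nlinarith
          have hrw : a / (a - b) = (-a) / (b - a) := by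
            rw [← neg_div_neg_eq]; ring_nf
          rw [hrw]
          constructor
          · exact div_nonneg (by linarith) (by linarith)
          · rw [div_le_one (by linarith)]; linarith
        · have hb0 : b < 0 := by nlinarith
          constructor
          · exact div_nonneg (by linarith) (by linarith)
          · rw [div_le_one (by linarith)]; linarith
      exact ⟨a / (a - b), ⟨hbounds.1, hbounds.2⟩, rfl⟩
    · rw [AffineMap.apply_lineMap, lineMap_real, ← ha, ← hb]
      field_simp
      ring

/-! ### Chamber level data -/

lemma chF_level_unique {A : Arrangement ℓ n} {𝓕 : Flag ℓ} {C : Set (Fin ℓ → ℝ)} {q q' : ℕ}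
    (h : ChF A 𝓕 q C) (h' : ChF A 𝓕 q' C) : q = q' := by
  by_contra hne
  rcases Nat.lt_or_ge q q' with hlt | hge
  · obtain ⟨-, hne1, -⟩ := h
    obtain ⟨-, -, h2'⟩ := h'
    rcases h2' with rfl | hemp
    · omega
    · have : (C ∩ 𝓕.F (q' - 1)).Nonempty := by
        obtain ⟨y, hy1, hy2⟩ := hne1
        exact ⟨y, hy1, F_mono 𝓕 (by omega) hy2⟩
      rw [hemp] at this
      exact absurd this not_nonempty_empty
  · have hlt : q' < q := by omega
    obtain ⟨-, hne1, -⟩ := h'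
    obtain ⟨-, -, h2⟩ := h
    rcases h2 with rfl | hemp
    · omega
    · have : (C ∩ 𝓕.F (q - 1)).Nonempty := by
        obtain ⟨y, hy1, hy2⟩ := hne1
        exact ⟨y, hy1, F_mono 𝓕 (by omega) hy2⟩
      rw [hemp] at this
      exact absurd this not_nonempty_empty

lemma chF_le_ell {A : Arrangement ℓ n} {𝓕 : Flag ℓ} {C : Set (Fin ℓ → ℝ)} {q : ℕ}
    (h : ChF A 𝓕 q C) : q ≤ ℓ := by
  by_contra hq
  push_neg at hq
  obtain ⟨hch, -, h2⟩ := h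
  rcases h2 with rfl | hemp
  · omega
  · have : C ∩ 𝓕.F (q - 1) = C := by
      rw [F_univ_of_ge 𝓕 (by omega), inter_univ]
    rw [this] at hemp
    obtain ⟨y, hy⟩ := chamber_nonempty hch
    rw [hemp] at hy
    exact hy

lemma L_eq_univ_of_dimS {A : Arrangement ℓ n} {X : Set (Fin ℓ → ℝ)} (hX : A.L X)
    (hd : dimS X = ℓ) : X = univ := by
  obtain ⟨hne, t, -, hXe⟩ := hX
  have htau : tau X = ⊤ := by
    apply Submodule.eq_top_of_finrank_eq
    rw [← dimS_eq_finrank_tau, hd]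
    simp [Module.finrank_pi]
  have hte : ∀ i ∈ t, False := by
    intro i hi
    apply A.nonzero i
    have hsub : X ⊆ A.H i := by
      rw [hXe]; intro y hy
      simp only [mem_iInter] at hy
      exact hy i hi
    obtain ⟨p, hp⟩ := id hne
    have hker := tau_le_ker_of_subset_H ⟨hne, t, subset_univ _, hXe⟩ hp hsub
    rw [htau] at hker
    apply LinearMap.ext
    intro u
    simpa using hker (show u ∈ (⊤ : Submodule ℝ (Fin ℓ → ℝ)) from Submodule.mem_top)
  have : t = ∅ := by
    ext i; simp only [mem_empty_iff_false, iff_false]; exact hte i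
  rw [hXe, this]
  simp

lemma tau_univ : tau (univ : Set (Fin ℓ → ℝ)) = ⊤ := by
  rw [tau]
  have hsp : affineSpan ℝ (univ : Set (Fin ℓ → ℝ)) = ⊤ := by
    rw [eq_top_iff]; intro x _; exact mem_affineSpan ℝ (Set.mem_univ x)
  rw [hsp, AffineSubspace.direction_top]

/-! ### Local structure at the minimum point -/

lemma subset_H_of_mem_F {A : Arrangement ℓ n} {𝓕 : Flag ℓ} (hgen : GenericFlag A 𝓕)
    {X : Set (Fin ℓ → ℝ)} {q : ℕ} (hX : A.L X) (hq : q ≤ ℓ) (hd : dimS X + q = ℓ)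
    {p : Fin ℓ → ℝ} (hpX : p ∈ X) (hpF : p ∈ 𝓕.F q) {i : Fin n} (hpi : A.α i p = 0) :
    X ⊆ A.H i := by
  by_contra hns
  have hYne : (X ∩ A.H i).Nonempty := ⟨p, hpX, hpi⟩
  have hYL : A.L (X ∩ A.H i) := L_inter_H hX hYne
  have hlt : dimS (X ∩ A.H i) < dimS X := dimS_inter_H_lt hX ⟨hpX, hpi⟩ hns
  have hemp := gen_empty hgen hYL hq (by omega)
  rw [eq_empty_iff_forall_notMem] at hemp
  exact hemp p ⟨hpF, hpX, hpi⟩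

lemma closure_sign {A : Arrangement ℓ n} {s : Set (Fin n)} {x p : Fin ℓ → ℝ}
    (hp : p ∈ closure (Qset A s x)) {i : Fin n} (hi : i ∈ s) :
    0 ≤ A.α i x * A.α i p := by
  have hsub : Qset A s x ⊆ {y | 0 ≤ A.α i x * A.α i y} := fun y hy => (hy i hi).le
  have hcl : IsClosed {y : Fin ℓ → ℝ | 0 ≤ A.α i x * A.α i y} :=
    isClosed_le continuous_const (continuous_const.mul (affcont _))
  exact (closure_minimal hsub hcl) hp

lemma chamber_local {A : Arrangement ℓ n} {𝓕 : Flag ℓ} (hgen : GenericFlag A 𝓕)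
    {C X : Set (Fin ℓ → ℝ)} {q : ℕ} {v x pc p : Fin ℓ → ℝ}
    (hch : A.IsChamber C) (hq : q ≤ ℓ)
    (hXL : A.L X) (hXd : dimS X = ℓ - q)
    (hXF : X ∩ 𝓕.F q = {p})
    (hpcl : p ∈ closure (C ∩ 𝓕.F q))
    (hv : v ∈ tau X)
    (hpc : pc ∈ C)
    (hsgn : ∀ i, (A.α i).linear v = 0 → 0 < A.α i pc * A.α i x) :
    (C ⊆ Qset A {i | (A.α i).linear v = 0} x) ∧
    (∀ i, A.α i p = 0 → (A.α i).linear v = 0) ∧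
    (∃ U, IsOpen U ∧ p ∈ U ∧ U ∩ Qset A {i | (A.α i).linear v = 0} x ⊆ C) := by
  set s : Set (Fin n) := {i | (A.α i).linear v = 0} with hs
  set D : Set (Fin ℓ → ℝ) := Qset A s x with hD
  have hCQ : C = Qset A univ pc := chamber_eq_Qset hch hpc
  have hCD : C ⊆ D := by
    intro y hy
    rw [hCQ] at hy
    intro i hi
    exact pos_mul_trans (hsgn i hi) (hy i trivial)
  have hpX : p ∈ X := by
    have : p ∈ X ∩ 𝓕.F q := by rw [hXF]; exact rfl
    exact this.1
  have hpF : p ∈ 𝓕.F q := by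
    have : p ∈ X ∩ 𝓕.F q := by rw [hXF]; exact rfl
    exact this.2
  have hd' : dimS X + q = ℓ := by
    have hle : dimS X ≤ ℓ := by
      have h := dimS_mono (subset_univ X)
      rw [dimS_univ] at h
      exact h
    omega
  have hker : ∀ i, A.α i p = 0 → (A.α i).linear v = 0 := by
    intro i hpi
    have hsub := subset_H_of_mem_F hgen hXL hq hd' hpX hpF hpi
    exact tau_le_ker_of_subset_H hXL hpX hsub hv
  refine ⟨hCD, hker, ?_⟩
  set U : Set (Fin ℓ → ℝ) := Qset A {i | A.α i p ≠ 0} p with hU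
  have hUopen : IsOpen U := Qset_open A _ p
  have hpU : p ∈ U := mem_Qset_self (fun i hi => hi)
  refine ⟨U, hUopen, hpU, ?_⟩
  have hsub : U ∩ D ⊆ A.compOn univ := by
    rintro y ⟨hyU, hyD⟩ i -
    by_cases hip : A.α i p = 0
    · have hiv : i ∈ s := hker i hip
      have := hyD i hiv
      intro h0; rw [h0, mul_zero] at this; exact lt_irrefl _ this
    · have := hyU i hip
      intro h0; rw [h0, mul_zero] at this; exact lt_irrefl _ this
  obtain ⟨y₀, hy₀U, hy₀C, hy₀F⟩ : ∃ y₀, y₀ ∈ U ∧ y₀ ∈ C ∧ y₀ ∈ 𝓕.F q := by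
    have := mem_closure_iff.mp hpcl U hUopen hpU
    obtain ⟨y₀, hy₀⟩ := this
    exact ⟨y₀, hy₀.1, hy₀.2.1, hy₀.2.2⟩
  have hy₀comp : y₀ ∈ A.compOn univ := chamber_subset_compOn hch hy₀C
  have hCcomp : C = connectedComponentIn (A.compOn univ) y₀ := by
    rw [connectedComponentIn_eq_Qset A hy₀comp]
    exact chamber_eq_Qset hch hy₀C
  rw [hCcomp]
  apply IsPreconnected.subset_connectedComponentIn
  · exact (Convex.isPreconnected ((Qset_convex A _ p).inter (Qset_convex A s x)))
  · exact ⟨hy₀U, hCD hy₀C⟩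
  · exact hsub

lemma descent {𝓕 : Flag ℓ} {C D U : Set (Fin ℓ → ℝ)} {q : ℕ}
    {p' r : Fin ℓ → ℝ}
    (hDc : Convex ℝ D) (hU : IsOpen U) (hpU : p' ∈ U) (hUD : U ∩ D ⊆ C) (hCD : C ⊆ D)
    (hp'cl : p' ∈ closure (C ∩ 𝓕.F q))
    (hmin : ∀ y ∈ closure (C ∩ 𝓕.F q), 𝓕.hq q p' ≤ 𝓕.hq q y)
    (hr : r ∈ closure (D ∩ 𝓕.F q)) (hlt : 𝓕.hq q r < 𝓕.hq q p') : False := by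
  set K := closure (D ∩ 𝓕.F q) with hK
  have hKc : Convex ℝ K := (hDc.inter (F_convex 𝓕 q)).closure
  have hp'K : p' ∈ K := closure_mono (inter_subset_inter_left _ hCD) hp'cl
  set c : ℝ →ᵃ[ℝ] (Fin ℓ → ℝ) := AffineMap.lineMap p' r with hc
  have hcc : Continuous c := AffineMap.continuous_of_finiteDimensional c
  have hV : IsOpen (c ⁻¹' U) := hU.preimage hcc
  have h0V : (0 : ℝ) ∈ c ⁻¹' U := by
    simp only [mem_preimage, hc, AffineMap.lineMap_apply_zero]
    exact hpU
  obtain ⟨δ, hδ, hball⟩ := Metric.isOpen_iff.mp hV 0 h0V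
  set t : ℝ := min (δ / 2) (1 / 2) with ht
  have ht0 : 0 < t := by apply lt_min <;> linarith
  have ht1 : t ≤ 1 := le_trans (min_le_right _ _) (by norm_num)
  have hyU : c t ∈ U := by
    apply hball
    rw [Metric.mem_ball, Real.dist_eq, sub_zero, abs_of_pos ht0]
    calc t ≤ δ / 2 := min_le_left _ _
    _ < δ := by linarith
  have hyK : c t ∈ K := by
    apply hKc.segment_subset hp'K hr
    rw [segment_eq_image_lineMap]
    exact ⟨t, ⟨ht0.le, ht1⟩, rfl⟩
  have hycl : c t ∈ closure (C ∩ 𝓕.F q) := by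
    have h1 : c t ∈ U ∩ K := ⟨hyU, hyK⟩
    have h2 := hU.inter_closure h1
    apply closure_mono ?_ h2
    intro y ⟨hy1, hy2⟩
    exact ⟨hUD ⟨hy1, hy2.1⟩, hy2.2⟩
  have hval : 𝓕.hq q (c t) = 𝓕.hq q p' + t * (𝓕.hq q r - 𝓕.hq q p') := by
    rw [hc, AffineMap.apply_lineMap, lineMap_real]
  have := hmin (c t) hycl
  rw [hval] at this
  nlinarith

/-! ### Uniqueness -/

lemma cond1_closure {A : Arrangement ℓ n} {𝓕 : Flag ℓ} (h1 : Cond1On A Set.univ 𝓕)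
    {C : Set (Fin ℓ → ℝ)} {q : ℕ} (hch : A.IsChamber C) (hq1 : 1 ≤ q) (hql : q ≤ ℓ)
    (hne : (C ∩ 𝓕.F q).Nonempty) (hemp : C ∩ 𝓕.F (q - 1) = ∅)
    {p : Fin ℓ → ℝ} (hp : p ∈ closure (C ∩ 𝓕.F q)) : 0 ≤ 𝓕.hq q p := by
  have hpos := h1 q hq1 hql C hch hne hemp
  have hsub : C ∩ 𝓕.F q ⊆ {y | 0 ≤ 𝓕.hq q y} := fun y hy => (hpos y hy).le
  have hcl : IsClosed {y : Fin ℓ → ℝ | 0 ≤ 𝓕.hq q y} :=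
    isClosed_le continuous_const (affcont _)
  exact (closure_minimal hsub hcl) hp

lemma chF_empty_pred {A : Arrangement ℓ n} {𝓕 : Flag ℓ} {C : Set (Fin ℓ → ℝ)} {q : ℕ}
    (hChF : ChF A 𝓕 q C) (hq1 : 1 ≤ q) : C ∩ 𝓕.F (q - 1) = ∅ := by
  rcases hChF.2.2 with h | h
  · omega
  · exact h

lemma uniq_core {A : Arrangement ℓ n} {𝓕 : Flag ℓ}
    (hgen : GenericFlag A 𝓕) (h1 : Cond1On A Set.univ 𝓕) (h2 : Cond2On A Set.univ 𝓕)
    {C C' X X' : Set (Fin ℓ → ℝ)} {q q' : ℕ} {v x pc pc' p p' : Fin ℓ → ℝ}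
    (hch : A.IsChamber C) (hChF : ChF A 𝓕 q C)
    (hXL : A.L X) (hXd : dimS X = ℓ - q) (hXF : X ∩ 𝓕.F q = {p})
    (hpcl : p ∈ closure (C ∩ 𝓕.F q))
    (hmin : ∀ y ∈ closure (C ∩ 𝓕.F q), 𝓕.hq q p ≤ 𝓕.hq q y)
    (hv : v ∈ tau X) (hpc : pc ∈ C)
    (hsgn : ∀ i, (A.α i).linear v = 0 → 0 < A.α i pc * A.α i x)
    (hch' : A.IsChamber C') (hChF' : ChF A 𝓕 q' C')
    (hXL' : A.L X') (hXd' : dimS X' = ℓ - q') (hXF' : X' ∩ 𝓕.F q' = {p'})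
    (hpcl' : p' ∈ closure (C' ∩ 𝓕.F q'))
    (hmin' : ∀ y ∈ closure (C' ∩ 𝓕.F q'), 𝓕.hq q' p' ≤ 𝓕.hq q' y)
    (hv' : v ∈ tau X') (hpc' : pc' ∈ C')
    (hsgn' : ∀ i, (A.α i).linear v = 0 → 0 < A.α i pc' * A.α i x)
    (hqq' : q ≤ q') (hne : C ≠ C') : False := by
  have hql : q ≤ ℓ := chF_le_ell hChF
  have hql' : q' ≤ ℓ := chF_le_ell hChF'
  set s : Set (Fin n) := {i | (A.α i).linear v = 0} with hs
  set D : Set (Fin ℓ → ℝ) := Qset A s x with hD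
  have hDconv : Convex ℝ D := Qset_convex A s x
  obtain ⟨hCD, hker, U, hUo, hpU, hUD⟩ :=
    chamber_local hgen hch hql hXL hXd hXF hpcl hv hpc hsgn
  obtain ⟨hCD', hker', U', hUo', hpU', hUD'⟩ :=
    chamber_local hgen hch' hql' hXL' hXd' hXF' hpcl' hv' hpc' hsgn'
  have hpX : p ∈ X ∧ p ∈ 𝓕.F q := by
    have : p ∈ X ∩ 𝓕.F q := by rw [hXF]; exact rfl
    exact ⟨this.1, this.2⟩
  have hpX' : p' ∈ X' ∧ p' ∈ 𝓕.F q' := by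
    have : p' ∈ X' ∩ 𝓕.F q' := by rw [hXF']; exact rfl
    exact ⟨this.1, this.2⟩
  rcases Nat.lt_or_ge q q' with hlt | hge
  · -- q < q'
    have hq1' : 1 ≤ q' := by omega
    have hq'p : 𝓕.hq q' p = 0 := by
      have hpf' : p ∈ 𝓕.F (q' - 1) := F_mono 𝓕 (by omega) hpX.2
      exact ((mem_F_pred_iff 𝓕 hq1' hql').mp hpf').2
    have hrcl : p ∈ closure (D ∩ 𝓕.F q') := by
      apply closure_mono ?_ hpcl
      intro y hy
      exact ⟨hCD hy.1, F_mono 𝓕 (by omega) hy.2⟩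
    have h0le : 0 ≤ 𝓕.hq q' p' :=
      cond1_closure h1 hch' hq1' hql' hChF'.2.1 (chF_empty_pred hChF' hq1') hpcl'
    rcases eq_or_lt_of_le h0le with heq | hpos
    · -- hq q' p' = 0 : p' ∈ F^{q'-1} ∩ X' contradicts genericity
      have hp'pred : p' ∈ 𝓕.F (q' - 1) :=
        (mem_F_pred_iff 𝓕 hq1' hql').mpr ⟨hpX'.2, heq.symm⟩
      have hemp := gen_empty hgen hXL' (q := q' - 1) (by omega) (by omega)
      rw [eq_empty_iff_forall_notMem] at hemp
      exact hemp p' ⟨hp'pred, hpX'.1⟩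
    · exact descent hDconv hUo' hpU' hUD' hCD' hpcl' hmin' hrcl (by rw [hq'p]; exact hpos)
  · -- q = q'
    have heq : q = q' := by omega
    subst heq
    by_cases hXX : X = X'
    · -- same X : p = p', and local chambers coincide
      have hpp : p = p' := by
        rw [hXX] at hXF
        rw [hXF] at hXF'
        exact (singleton_eq_singleton_iff.mp hXF').symm ▸ rfl
      subst hpp
      obtain ⟨y₀, hy₀⟩ := mem_closure_iff.mp hpcl (U ∩ U') (hUo.inter hUo') ⟨hpU, hpU'⟩
      have hy₀C : y₀ ∈ C := hy₀.2.1
      have hy₀C' : y₀ ∈ C' := hUD' ⟨hy₀.1.2, hCD hy₀C⟩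
      exact hne (chamber_eq_of_mem hch hch' hy₀C hy₀C')
    · -- different X : condition (2) gives different h_q values, then descent
      have hq1 : 1 ≤ q := by
        by_contra h0
        have hq0 : q = 0 := by omega
        apply hXX
        rw [L_eq_univ_of_dimS hXL (by omega), L_eq_univ_of_dimS hXL' (by omega)]
      have hval := h2 q hq1 hql X X' hXL hXL' hXd hXd' hXX p ⟨hpX.1, hpX.2⟩ p' ⟨hpX'.1, hpX'.2⟩
      rcases lt_or_gt_of_ne hval with hlt | hgt
      · -- hq p < hq p' : descend in C' towards p
        have hrcl : p ∈ closure (D ∩ 𝓕.F q) :=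
          closure_mono (inter_subset_inter_left _ hCD) hpcl
        exact descent hDconv hUo' hpU' hUD' hCD' hpcl' hmin' hrcl hlt
      · -- symmetric
        have hrcl : p' ∈ closure (D ∩ 𝓕.F q) :=
          closure_mono (inter_subset_inter_left _ hCD') hpcl'
        exact descent hDconv hUo hpU hUD hCD hpcl hmin hrcl hgt

/-! ### Existence -/

lemma mem_D_chamber {A : Arrangement ℓ n} {s : Set (Fin n)} {x y : Fin ℓ → ℝ}
    (hy : y ∈ Qset A s x) (hygen : ∀ i, A.α i y ≠ 0) :
    A.IsChamber (Qset A univ y) ∧ y ∈ Qset A univ y ∧ Qset A univ y ⊆ Qset A s x := by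
  have hycomp : y ∈ A.compOn univ := fun i _ => hygen i
  refine ⟨isChamber_Qset hycomp, mem_Qset_self hycomp, ?_⟩
  intro z hz i hi
  have h1 : 0 < A.α i y * A.α i z := hz i trivial
  have h2 : 0 < A.α i y * A.α i x := by have := hy i hi; nlinarith
  exact pos_mul_trans h2 h1

set_option maxHeartbeats 1000000 in
lemma exists_chamber {A : Arrangement ℓ n} {𝓕 : Flag ℓ}
    (hgen : GenericFlag A 𝓕) (h1 : Cond1On A Set.univ 𝓕)
    (qC : Set (Fin ℓ → ℝ) → ℕ) (XC : Set (Fin ℓ → ℝ) → Set (Fin ℓ → ℝ))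
    (pC : Set (Fin ℓ → ℝ) → (Fin ℓ → ℝ))
    (hdata : ∀ C, A.IsChamber C → ChF A 𝓕 (qC C) C ∧
        IsXC A 𝓕 (qC C) C (XC C) ∧ pC C ∈ C ∩ 𝓕.F (qC C))
    (v x : Fin ℓ → ℝ) (hx : ∀ i, (A.α i).linear v = 0 → A.α i x ≠ 0) :
    ∃ C, A.IsChamber C ∧ v ∈ tau (XC C) ∧
      ∀ i, (A.α i).linear v = 0 → 0 < A.α i (pC C) * A.α i x := by
  classical
  set s : Set (Fin n) := {i | (A.α i).linear v = 0} with hs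
  set D : Set (Fin ℓ → ℝ) := Qset A s x with hD
  have hxD : x ∈ D := mem_Qset_self (fun i hi => hx i hi)
  have hPl : ∃ j, (D ∩ 𝓕.F j).Nonempty := by
    refine ⟨ℓ, ⟨x, hxD, ?_⟩⟩
    rw [F_univ_of_ge 𝓕 (le_refl ℓ)]; trivial
  set q : ℕ := Nat.find hPl with hqdef
  have hq : (D ∩ 𝓕.F q).Nonempty := Nat.find_spec hPl
  have hql : q ≤ ℓ := Nat.find_le (by
    refine ⟨x, hxD, ?_⟩
    rw [F_univ_of_ge 𝓕 (le_refl ℓ)]; trivial)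
  rcases Nat.eq_zero_or_pos q with hq0 | hq1
  · -- q = 0 : the chamber containing the point F^0
    obtain ⟨p₀, hp₀D, hp₀F⟩ := hq
    rw [hq0] at hp₀F
    have hp₀gen : ∀ i, A.α i p₀ ≠ 0 := by
      intro i h0
      have hdH := dimS_H A i
      have hemp := gen_empty hgen (q := 0) (L_H A i) (by omega) (by omega)
      rw [eq_empty_iff_forall_notMem] at hemp
      exact hemp p₀ ⟨hp₀F, h0⟩
    obtain ⟨hch, hp₀C, hCD⟩ := mem_D_chamber hp₀D hp₀gen
    set C₀ : Set (Fin ℓ → ℝ) := Qset A univ p₀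
    have hqC0 : qC C₀ = 0 := by
      apply chF_level_unique (hdata C₀ hch).1
      exact ⟨hch, ⟨p₀, hp₀C, hp₀F⟩, Or.inl rfl⟩
    have hXL : A.L (XC C₀) := (hdata C₀ hch).2.1.1
    have hXd : dimS (XC C₀) = ℓ := by
      have := (hdata C₀ hch).2.1.2.1
      rw [hqC0] at this
      omega
    have hXuniv : XC C₀ = univ := L_eq_univ_of_dimS hXL hXd
    refine ⟨C₀, hch, ?_, ?_⟩
    · rw [hXuniv, tau_univ]; trivial
    · intro i hi
      have hpCmem : pC C₀ ∈ C₀ := ((hdata C₀ hch).2.2).1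
      have h1' : 0 < A.α i p₀ * A.α i (pC C₀) := hpCmem i trivial
      have h2' : 0 < A.α i p₀ * A.α i x := by have := hp₀D i hi; nlinarith
      have := pos_mul_trans h1' h2'
      nlinarith
  · -- q ≥ 1
    have hDemp : D ∩ 𝓕.F (q - 1) = ∅ := by
      rw [← not_nonempty_iff_eq_empty]
      exact Nat.find_min hPl (by omega)
    set 𝒞 : Set (Set (Fin ℓ → ℝ)) :=
      {C | A.IsChamber C ∧ C ⊆ D ∧ (C ∩ 𝓕.F q).Nonempty} with h𝒞
    have hmk : ∀ y ∈ D ∩ 𝓕.F q, (∀ i, A.α i y ≠ 0) → Qset A univ y ∈ 𝒞 ∧ y ∈ Qset A univ y := by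
      intro y hy hygen
      obtain ⟨hch, hyC, hCD⟩ := mem_D_chamber hy.1 hygen
      exact ⟨⟨hch, hCD, ⟨y, hyC, hy.2⟩⟩, hyC⟩
    have hCne : 𝒞.Nonempty := by
      obtain ⟨y₀, hy₀, hy₀gen⟩ := exists_offH hgen hql (Qset_open A s x) hq
      exact ⟨Qset A univ y₀, (hmk y₀ hy₀ hy₀gen).1⟩
    have hCfin : 𝒞.Finite := by
      apply (finite_chambers A).subset
      rintro C ⟨h, -, -⟩; exact h
    have hqCeq : ∀ C ∈ 𝒞, qC C = q := by
      rintro C ⟨hch, hCD, hCF⟩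
      apply chF_level_unique (hdata C hch).1
      refine ⟨hch, hCF, Or.inr ?_⟩
      rw [← subset_empty_iff, ← hDemp]
      exact inter_subset_inter_left _ hCD
    have hpts : ∀ C, C ∈ 𝒞 → ∃ p, (XC C ∩ 𝓕.F q = {p}) ∧ p ∈ closure (C ∩ 𝓕.F q) ∧
        ∀ y ∈ closure (C ∩ 𝓕.F q), 𝓕.hq q p ≤ 𝓕.hq q y := by
      intro C hc
      have := (hdata C hc.1).2.1.2.2
      rw [hqCeq C hc] at this
      exact this
    set f : Set (Fin ℓ → ℝ) → ℝ :=
      fun C => if h : C ∈ 𝒞 then 𝓕.hq q ((hpts C h).choose) else 0 with hf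
    obtain ⟨Cs, hCs, hminf⟩ := Set.exists_min_image 𝒞 f hCfin hCne
    set ps : Fin ℓ → ℝ := (hpts Cs hCs).choose with hps
    obtain ⟨hXFs, hpcls, hmins⟩ := (hpts Cs hCs).choose_spec
    rw [← hps] at hXFs hpcls hmins
    have hfCs : f Cs = 𝓕.hq q ps := by rw [hf]; simp only [hCs, dif_pos]; rfl
    have hchs : A.IsChamber Cs := hCs.1
    have hCsD : Cs ⊆ D := hCs.2.1
    have hXLs : A.L (XC Cs) := (hdata Cs hchs).2.1.1
    have hdimXs : dimS (XC Cs) = ℓ - q := by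
      have := (hdata Cs hchs).2.1.2.1
      rw [hqCeq Cs hCs] at this
      exact this
    have hpsmem : ps ∈ XC Cs ∧ ps ∈ 𝓕.F q := by
      have : ps ∈ XC Cs ∩ 𝓕.F q := by rw [hXFs]; exact rfl
      exact ⟨this.1, this.2⟩
    have hdims_le : dimS (XC Cs) ≤ ℓ := by
      have h := dimS_mono (subset_univ (XC Cs))
      rw [dimS_univ] at h; exact h
    have hd' : dimS (XC Cs) + q = ℓ := by omega
    -- the subarrangement of hyperplanes through ps parallel to v
    set sV : Set (Fin n) := {i | A.α i ps = 0 ∧ (A.α i).linear v = 0} with hsV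
    set Y : Set (Fin ℓ → ℝ) := ⋂ i ∈ sV, A.H i with hY
    have hpsY : ps ∈ Y := by
      rw [hY]; exact mem_iInter₂.mpr (fun i hi => hi.1)
    have hYL : A.L Y := ⟨⟨ps, hpsY⟩, sV, subset_univ _, rfl⟩
    have htauY : tau Y = ⨅ i ∈ sV, LinearMap.ker (A.α i).linear :=
      tau_eq_biInf A sV ps hpsY
    have hvY : v ∈ tau Y := by
      rw [htauY]
      apply Submodule.mem_iInf .. |>.mpr
      intro i
      apply Submodule.mem_iInf .. |>.mpr
      intro hi
      exact hi.2
    have hXsubY : XC Cs ⊆ Y := by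
      intro y hy
      rw [hY]
      apply mem_iInter₂.mpr
      intro i hi
      exact subset_H_of_mem_F hgen hXLs hql hd' hpsmem.1 hpsmem.2 hi.1 hy
    have hdY : ℓ - q ≤ dimS Y := by rw [← hdimXs]; exact dimS_mono hXsubY
    rcases eq_or_lt_of_le hdY with hdeq | hdgt
    · -- dim Y = ℓ - q : then X = Y and v ∈ τ(X)
      have htaueq : tau (XC Cs) = tau Y := by
        apply Submodule.eq_of_le_of_finrank_eq (tau_mono hXsubY)
        rw [← dimS_eq_finrank_tau, ← dimS_eq_finrank_tau, hdimXs, ← hdeq]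
      refine ⟨Cs, hchs, ?_, ?_⟩
      · rw [htaueq]; exact hvY
      · intro i hi
        have hpCmem : pC Cs ∈ Cs := ((hdata Cs hchs).2.2).1
        have := hCsD hpCmem i hi
        nlinarith
    · -- dim Y > ℓ - q : derive a contradiction by descending inside D ∩ F^q
      exfalso
      -- a point z of F^{q-1} ∩ Y
      obtain ⟨Wz, hWzne, hWzco, -⟩ := (hgen Y hYL (q - 1) (by omega)).1 (by omega)
      obtain ⟨z, hz⟩ := hWzne
      rw [hWzco] at hz
      obtain ⟨hzF, hzY⟩ := hz
      have hqz : 𝓕.hq q z = 0 := ((mem_F_pred_iff 𝓕 hq1 hql).mp hzF).2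
      -- h_q is positive at ps
      have hCsFne : (Cs ∩ 𝓕.F q).Nonempty := hCs.2.2
      have hCsemp : Cs ∩ 𝓕.F (q - 1) = ∅ := by
        rw [← subset_empty_iff, ← hDemp]
        exact inter_subset_inter_left _ hCsD
      have hps0 : 0 ≤ 𝓕.hq q ps := cond1_closure h1 hchs hq1 hql hCsFne hCsemp hpcls
      have hpspos : 0 < 𝓕.hq q ps := by
        rcases eq_or_lt_of_le hps0 with h0 | h; swap
        · exact h
        · exfalso
          have hpred : ps ∈ 𝓕.F (q - 1) := (mem_F_pred_iff 𝓕 hq1 hql).mpr ⟨hpsmem.2, h0.symm⟩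
          have hemp := gen_empty hgen hXLs (q := q - 1) (by omega) (by omega)
          rw [eq_empty_iff_forall_notMem] at hemp
          exact hemp ps ⟨hpred, hpsmem.1⟩
      -- directions
      obtain ⟨WG, hWGco, -⟩ := gen_F hgen hql
      have hzWG : z ∈ WG := by
        rw [← SetLike.mem_coe, hWGco]; exact F_mono 𝓕 (by omega) hzF
      have hpsWG : ps ∈ WG := by rw [← SetLike.mem_coe, hWGco]; exact hpsmem.2
      obtain ⟨y₀, hy₀C, hy₀F⟩ := hCsFne
      have hy₀WG : y₀ ∈ WG := by rw [← SetLike.mem_coe, hWGco]; exact hy₀F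
      set w : Fin ℓ → ℝ := z - ps with hw
      set w₁ : Fin ℓ → ℝ := y₀ - ps with hw₁
      have hwG : w ∈ WG.direction := by
        have := AffineSubspace.vsub_mem_direction hzWG hpsWG
        rwa [vsub_eq_sub] at this
      have hw₁G : w₁ ∈ WG.direction := by
        have := AffineSubspace.vsub_mem_direction hy₀WG hpsWG
        rwa [vsub_eq_sub] at this
      have hwker : ∀ i ∈ sV, (A.α i).linear w = 0 := by
        intro i hi
        have hzy : z - ps ∈ tau Y := (mem_L_iff hYL hpsY).mp hzY
        rw [htauY] at hzy
        have h1' := Submodule.mem_iInf .. |>.mp hzy i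
        have h2' := Submodule.mem_iInf .. |>.mp h1' hi
        exact h2'
      set a : ℝ := (𝓕.hq q).linear w with ha
      set b : ℝ := (𝓕.hq q).linear w₁ with hb
      have haval : a = -(𝓕.hq q ps) := by
        have h1' : 𝓕.hq q (ps + w) = 𝓕.hq q ps + a := aff_add _ ps w
        have h2' : ps + w = z := by rw [hw]; abel
        rw [h2'] at h1'
        rw [hqz] at h1'
        linarith
      -- choose small positive θ and t
      set g : ℝ × ℝ → (Fin ℓ → ℝ) := fun u => ps + u.1 • w + u.2 • w₁ with hg
      have hgc : Continuous g := by
        apply Continuous.add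
        apply Continuous.add continuous_const
        · exact (continuous_fst.smul continuous_const)
        · exact (continuous_snd.smul continuous_const)
      set N : Set (ℝ × ℝ) :=
        ⋂ i : Fin n, {u | (i ∈ s ∧ A.α i ps ≠ 0) → 0 < A.α i x * A.α i (g u)} with hN
      have hNopen : IsOpen N := by
        apply isOpen_iInter_of_finite
        intro i
        by_cases hcond : i ∈ s ∧ A.α i ps ≠ 0
        · have hset : {u : ℝ × ℝ | (i ∈ s ∧ A.α i ps ≠ 0) → 0 < A.α i x * A.α i (g u)} =
              {u : ℝ × ℝ | 0 < A.α i x * A.α i (g u)} := by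
            ext u; simp only [mem_setOf_eq]; exact ⟨fun h => h hcond, fun h _ => h⟩
          rw [hset]
          exact isOpen_lt continuous_const (continuous_const.mul ((affcont _).comp hgc))
        · simp [hcond]
      have h0N : ((0 : ℝ), (0 : ℝ)) ∈ N := by
        rw [hN]
        apply mem_iInter.mpr
        intro i
        rintro ⟨hi, hips⟩
        have hg0 : g (0, 0) = ps := by rw [hg]; simp
        rw [hg0]
        have hwk : 0 ≤ A.α i x * A.α i ps := by
          apply closure_sign (s := s) (x := x) ?_ hi
          exact closure_mono hCsD (closure_mono inter_subset_left hpcls)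
        have hne0 : A.α i x * A.α i ps ≠ 0 := mul_ne_zero (hx i hi) hips
        exact lt_of_le_of_ne hwk (Ne.symm hne0)
      obtain ⟨δ, hδpos, hball⟩ := Metric.isOpen_iff.mp hNopen (0, 0) h0N
      set θ : ℝ := δ / 2 with hθ
      have hθpos : 0 < θ := by positivity
      set t : ℝ := min (δ / 2) (δ * 𝓕.hq q ps / (4 * (|b| + 1))) with htdef
      have habs : 0 < |b| + 1 := by positivity
      have htpos : 0 < t := by
        apply lt_min (by positivity)
        positivity
      have htle : t ≤ δ / 2 := min_le_left _ _
      have htb : t * b < θ * 𝓕.hq q ps := by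
        have h1' : t * b ≤ t * |b| := by
          apply mul_le_mul_of_nonneg_left (le_abs_self b) htpos.le
        have h2' : t ≤ δ * 𝓕.hq q ps / (4 * (|b| + 1)) := min_le_right _ _
        have h3' : t * |b| ≤ δ * 𝓕.hq q ps / (4 * (|b| + 1)) * |b| :=
          mul_le_mul_of_nonneg_right h2' (abs_nonneg b)
        have h4' : δ * 𝓕.hq q ps / (4 * (|b| + 1)) * |b| < δ / 2 * 𝓕.hq q ps := by
          rw [div_mul_eq_mul_div, div_lt_iff₀ (by positivity)]
          nlinarith [mul_nonneg (mul_pos hδpos hpspos).le (abs_nonneg b),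
            mul_pos hδpos hpspos]
        calc t * b ≤ t * |b| := h1'
        _ ≤ δ * 𝓕.hq q ps / (4 * (|b| + 1)) * |b| := h3'
        _ < δ / 2 * 𝓕.hq q ps := h4'
        _ = θ * 𝓕.hq q ps := by rw [hθ]
      set y' : Fin ℓ → ℝ := g (θ, t) with hy'
      have hy'eq : y' = ps + (θ • w + t • w₁) := by rw [hy', hg]; simp; abel
      have hy'F : y' ∈ 𝓕.F q := by
        have hdir : θ • w + t • w₁ ∈ WG.direction :=
          Submodule.add_mem _ (Submodule.smul_mem _ θ hwG) (Submodule.smul_mem _ t hw₁G)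
        have := AffineSubspace.vadd_mem_of_mem_direction hdir hpsWG
        rw [vadd_eq_add] at this
        have heq' : θ • w + t • w₁ + ps = y' := by rw [hy'eq]; abel
        rw [heq'] at this
        rw [← SetLike.mem_coe, hWGco] at this
        exact this
      have hy'D : y' ∈ D := by
        intro i hi
        by_cases hips : A.α i ps = 0
        · have hisV : i ∈ sV := ⟨hips, hi⟩
          have hval : A.α i y' = t * (A.α i).linear w₁ := by
            rw [hy'eq, aff_add, hips, map_add, map_smul, map_smul, hwker i hisV]
            simp [smul_eq_mul]
          have hlinw₁ : (A.α i).linear w₁ = A.α i y₀ := by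
            have h1' : A.α i (ps + w₁) = A.α i ps + (A.α i).linear w₁ := aff_add _ ps w₁
            have h2' : ps + w₁ = y₀ := by rw [hw₁]; abel
            rw [h2', hips] at h1'
            linarith
          rw [hval, hlinw₁]
          have hy₀D : 0 < A.α i x * A.α i y₀ := hCsD hy₀C i hi
          have hprod := mul_pos htpos hy₀D
          calc (0:ℝ) < t * (A.α i x * A.α i y₀) := hprod
          _ = A.α i x * (t * A.α i y₀) := by ring
        · have hmem : (θ, t) ∈ Metric.ball ((0 : ℝ), (0 : ℝ)) δ := by
            rw [Metric.mem_ball, Prod.dist_eq]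
            apply max_lt
            · rw [Real.dist_eq, sub_zero, abs_of_pos hθpos]; rw [hθ]; linarith
            · rw [Real.dist_eq, sub_zero, abs_of_pos htpos]; linarith
          have := hball hmem
          rw [hN] at this
          exact mem_iInter.mp this i ⟨hi, hips⟩
      have hy'val : 𝓕.hq q y' < 𝓕.hq q ps := by
        have h1' : 𝓕.hq q y' = 𝓕.hq q ps + (θ * a + t * b) := by
          rw [hy'eq, aff_add, map_add, map_smul, map_smul]
          simp [smul_eq_mul, ← ha, ← hb]
        rw [h1', haval]
        linarith [htb]
      -- find a generic point near y' and get a contradiction with minimality of f at Cs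
      have hU'open : IsOpen (D ∩ {y | 𝓕.hq q y < 𝓕.hq q ps}) :=
        (Qset_open A s x).inter (isOpen_lt (affcont _) continuous_const)
      obtain ⟨y'', hy''mem, hy''gen⟩ := exists_offH hgen hql hU'open
        ⟨y', ⟨hy'D, hy'val⟩, hy'F⟩
      obtain ⟨⟨hy''D, hy''lt⟩, hy''F⟩ := hy''mem
      obtain ⟨hC''mem, hy''C⟩ := hmk y'' ⟨hy''D, hy''F⟩ hy''gen
      have hlef : f Cs ≤ f (Qset A univ y'') := hminf _ hC''mem
      have hfC'' : f (Qset A univ y'') ≤ 𝓕.hq q y'' := by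
        rw [hf]
        simp only [hC''mem, dif_pos]
        obtain ⟨-, -, hminC''⟩ := (hpts (Qset A univ y'') hC''mem).choose_spec
        exact hminC'' y'' (subset_closure ⟨hy''C, hy''F⟩)
      rw [hfCs] at hlef
      have hy''lt' : 𝓕.hq q y'' < 𝓕.hq q ps := hy''lt
      linarith

/-! ### Uniqueness wrapper -/

lemma uniq {A : Arrangement ℓ n} {𝓕 : Flag ℓ}
    (hgen : GenericFlag A 𝓕) (h1 : Cond1On A Set.univ 𝓕) (h2 : Cond2On A Set.univ 𝓕)
    (qC : Set (Fin ℓ → ℝ) → ℕ) (XC : Set (Fin ℓ → ℝ) → Set (Fin ℓ → ℝ))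
    (pC : Set (Fin ℓ → ℝ) → (Fin ℓ → ℝ))
    (hdata : ∀ C, A.IsChamber C → ChF A 𝓕 (qC C) C ∧
        IsXC A 𝓕 (qC C) C (XC C) ∧ pC C ∈ C ∩ 𝓕.F (qC C))
    {C C' : Set (Fin ℓ → ℝ)} (hch : A.IsChamber C) (hch' : A.IsChamber C') (hne : C ≠ C')
    {v x : Fin ℓ → ℝ} (hv : v ∈ tau (XC C)) (hv' : v ∈ tau (XC C'))
    (hsgn : ∀ i, (A.α i).linear v = 0 → 0 < A.α i (pC C) * A.α i x)
    (hsgn' : ∀ i, (A.α i).linear v = 0 → 0 < A.α i (pC C') * A.α i x) : False := by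
  obtain ⟨hChF, hXC, hpCm⟩ := hdata C hch
  obtain ⟨hChF', hXC', hpCm'⟩ := hdata C' hch'
  obtain ⟨hXL, hXd, p, hXF, hpcl, hmin⟩ := hXC
  obtain ⟨hXL', hXd', p', hXF', hpcl', hmin'⟩ := hXC'
  rcases le_total (qC C) (qC C') with h | h
  · exact uniq_core hgen h1 h2 hch hChF hXL hXd hXF hpcl hmin hv hpCm.1 hsgn
      hch' hChF' hXL' hXd' hXF' hpcl' hmin' hv' hpCm'.1 hsgn' h hne
  · exact uniq_core hgen h1 h2 hch' hChF' hXL' hXd' hXF' hpcl' hmin' hv' hpCm'.1 hsgn'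
      hch hChF hXL hXd hXF hpcl hmin hv hpCm.1 hsgn h (Ne.symm hne)

end IY

namespace IY
open Arrangement

/-- The complexified complement `M(A)` is the disjoint union
of the pieces `S(C)` over all chambers `C ∈ ch(A)`. -/
theorem M_eq_disjoint_union_S (ℓ n : ℕ) (A : Arrangement ℓ n) (𝓕 : Flag ℓ)
    (hind : LinearIndependent ℝ fun j : Fin ℓ => (𝓕.h j).linear)
    (hgen : GenericFlag A 𝓕)
    (h1 : Cond1On A Set.univ 𝓕) (h2 : Cond2On A Set.univ 𝓕)
    (qC : Set (Fin ℓ → ℝ) → ℕ)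
    (XC : Set (Fin ℓ → ℝ) → Set (Fin ℓ → ℝ))
    (pC : Set (Fin ℓ → ℝ) → (Fin ℓ → ℝ))
    (hdata : ∀ C, A.IsChamber C → ChF A 𝓕 (qC C) C ∧
        IsXC A 𝓕 (qC C) C (XC C) ∧ pC C ∈ C ∩ 𝓕.F (qC C)) :
    (∀ C C', A.IsChamber C → A.IsChamber C' → C ≠ C' →
        S A (tau (XC C)) (pC C) ∩ S A (tau (XC C')) (pC C') = ∅) ∧
    A.M = ⋃ C ∈ {C : Set (Fin ℓ → ℝ) | A.IsChamber C}, S A (tau (XC C)) (pC C) := by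
  have signs : ∀ C, A.IsChamber C → ∀ z : Fin ℓ → ℂ, z ∈ S A (tau (XC C)) (pC C) →
      ∀ i, (A.α i).linear (imP z) = 0 → 0 < A.α i (pC C) * A.α i (reP z) := by
    intro C hch z hz i hi
    obtain ⟨hv, hsep⟩ := hz
    have hpCc : A.α i (pC C) ≠ 0 :=
      chamber_subset_compOn hch ((hdata C hch).2.2).1 i trivial
    have hxne : A.α i (reP z) ≠ 0 := by
      intro h0
      exact (hsep i (sepPt_of_zero h0)) hi
    by_contra hle
    exact (hsep i ((sepPt_iff hpCc hxne).mpr hle)) hi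
  constructor
  · -- disjointness
    intro C C' hch hch' hne
    rw [eq_empty_iff_forall_notMem]
    rintro z ⟨hzC, hzC'⟩
    exact uniq hgen h1 h2 qC XC pC hdata hch hch' hne hzC.1 hzC'.1
      (signs C hch z hzC) (signs C' hch' z hzC')
  · -- coverage
    ext z
    constructor
    · intro hz
      have hx : ∀ i, (A.α i).linear (imP z) = 0 → A.α i (reP z) ≠ 0 := by
        intro i hi h0
        exact hz i ⟨h0, hi⟩
      obtain ⟨C, hch, hv, hsgn⟩ := exists_chamber hgen h1 qC XC pC hdata (imP z) (reP z) hx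
      rw [mem_iUnion₂]
      refine ⟨C, hch, hv, ?_⟩
      intro i hsep hlin
      have hpCc : A.α i (pC C) ≠ 0 :=
        chamber_subset_compOn hch ((hdata C hch).2.2).1 i trivial
      exact (sepPt_iff hpCc (hx i hlin)).mp hsep (hsgn i hlin)
    · intro hz
      rw [mem_iUnion₂] at hz
      obtain ⟨C, hch, hzS⟩ := hz
      rintro i ⟨h0, hlin⟩
      exact hzS.2 i (sepPt_of_zero h0) hlin

end IY
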